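/- Let a_1, …, a_N be real numbers and let e_k = Σ_{|I|=k} ∏_{i∈I} a_i denote the k-th elementary symmetric polynomial of a_1,…,a_N. If e_k ≥ 0 for all k = 1, …, N, then a_i ≥ 0 for all i. -/

import Mathlib

open BigOperators

/-- If all elementary symmetric polynomials `e_k`, `k = 1, …, N`, of real numbers
`a_1, …, a_N` are nonnegative, then all `a_i` are nonnegative. -/
theorem stmt_11 {N : ℕ} (a : Fin N → ℝ)
    (h : ∀ k, 1 ≤ k → k ≤ N →
      0 ≤ ∑ I ∈ Finset.univ.powersetCard k, ∏ i ∈ I, a i) :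
    ∀ i, 0 ≤ a i := by
  intro i
  by_contra hi
  push_neg at hi
  set x : ℝ := -a i with hx
  have hxpos : 0 < x := by simp [hx]; linarith
  have hzero : (∏ j : Fin N, (a j + x)) = 0 :=
    Finset.prod_eq_zero (Finset.mem_univ i) (by simp [hx])
  rw [Finset.prod_add] at hzero
  rw [Finset.sum_powerset] at hzero
  have hcard : (Finset.univ : Finset (Fin N)).card = N := by simp
  rw [hcard] at hzero
  have hterm : ∀ k ∈ Finset.range (N + 1),
      0 ≤ ∑ t ∈ Finset.univ.powersetCard k, (∏ j ∈ t, a j) * ∏ j ∈ Finset.univ \ t, x := by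
    intro k hk
    rcases Nat.eq_zero_or_pos k with rfl | hk1
    · simp [Finset.powersetCard_zero, hcard]
      positivity
    · have hkN : k ≤ N := Nat.lt_succ_iff.mp (Finset.mem_range.mp hk)
      have hx' : ∀ t ∈ Finset.univ.powersetCard k,
          (∏ j ∈ t, a j) * ∏ j ∈ (Finset.univ : Finset (Fin N)) \ t, x
            = (∏ j ∈ t, a j) * x ^ (N - k) := by
        intro t ht
        rw [Finset.prod_const, Finset.card_sdiff_of_subset (Finset.subset_univ t), hcard,
          (Finset.mem_powersetCard.mp ht).2]
      rw [Finset.sum_congr rfl hx', ← Finset.sum_mul]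
      exact mul_nonneg (h k hk1 hkN) (by positivity)
  have h0 : (∑ t ∈ Finset.univ.powersetCard 0, (∏ j ∈ t, a j) * ∏ j ∈ Finset.univ \ t, x)
      = x ^ N := by
    simp [Finset.powersetCard_zero, hcard]
  have hmem : 0 ∈ Finset.range (N + 1) := by simp
  have hsplit := Finset.sum_eq_sum_sdiff_singleton_add hmem
    (fun k => ∑ t ∈ Finset.univ.powersetCard k, (∏ j ∈ t, a j) * ∏ j ∈ Finset.univ \ t, x)
  rw [hsplit, h0] at hzero
  have hrest : 0 ≤ ∑ k ∈ Finset.range (N + 1) \ {0},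
      ∑ t ∈ Finset.univ.powersetCard k, (∏ j ∈ t, a j) * ∏ j ∈ Finset.univ \ t, x :=
    Finset.sum_nonneg fun k hk => hterm k (Finset.mem_sdiff.mp hk).1
  have : (0:ℝ) < x ^ N := by positivity
  linarith
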